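/- Let a_n = (2^n - 1)·|2^n - 1|_3, where |·|_3 is the 3-adic absolute value (so a_n is a positive integer). Then (1/n)·log(a_n) converges to log 2 as n → ∞. -/

import Mathlib

lemma odd_not_dvd {n : ℕ} (hn : Odd n) : ¬ (3 ∣ 2 ^ n - 1) := by
  intro h
  have h1 : (1 : ℕ) ≤ 2 ^ n := Nat.one_le_two_pow
  have h2 : (3 : ℤ) ∣ (2 : ℤ) ^ n - 1 := by
    have := Int.natCast_dvd_natCast.mpr h
    push_cast [h1] at this
    exact_mod_cast this
  have h3 : ((2 : ZMod 3)) ^ n = 1 := by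
    have := (ZMod.intCast_zmod_eq_zero_iff_dvd _ 3).mpr h2
    push_cast at this
    linear_combination this
  rw [show (2 : ZMod 3) = -1 by decide, hn.neg_one_pow] at h3
  exact absurd h3 (by decide)

lemma val_bound {n : ℕ} (hn : 1 ≤ n) :
    3 ^ padicValNat 3 (2 ^ n - 1) ≤ 3 * n := by
  rcases Nat.even_or_odd n with he | ho
  · obtain ⟨m, hm⟩ := he
    have hm1 : m ≠ 0 := by omega
    have hpow : 2 ^ n - 1 = 4 ^ m - 1 ^ m := by
      rw [hm, one_pow, pow_add, show (2:ℕ)^m * 2^m = 4^m by rw [← mul_pow]; norm_num]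
    have hval : padicValNat 3 (2 ^ n - 1) = 1 + padicValNat 3 m := by
      rw [hpow, padicValNat.pow_sub_pow (by decide) (by norm_num) (by norm_num) (by norm_num) hm1]
      norm_num
    rw [hval, pow_add, pow_one]
    have : 3 ^ padicValNat 3 m ≤ m :=
      Nat.le_of_dvd (by omega) pow_padicValNat_dvd
    omega
  · rw [padicValNat.eq_zero_of_not_dvd (odd_not_dvd ho)]
    omega

theorem growth_rate_periodic_points :
    Filter.Tendsto
      (fun n : ℕ =>
        Real.log ((((2 : ℚ) ^ n - 1) * padicNorm 3 ((2 : ℚ) ^ n - 1) : ℚ) : ℝ) / (n : ℝ))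
      Filter.atTop (nhds (Real.log 2)) := by
  have hlog2 : (0:ℝ) < Real.log 2 := Real.log_pos (by norm_num)
  set v : ℕ → ℕ := fun n => padicValNat 3 (2 ^ n - 1) with hv
  -- rewrite the function eventually
  have key : ∀ n : ℕ, 1 ≤ n →
      Real.log ((((2 : ℚ) ^ n - 1) * padicNorm 3 ((2 : ℚ) ^ n - 1) : ℚ) : ℝ) / (n : ℝ)
        = Real.log ((2:ℝ) ^ n - 1) / n - (v n * Real.log 3) / n := by
    intro n hn
    have h1 : (1 : ℕ) ≤ 2 ^ n := Nat.one_le_two_pow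
    have hlt : (1 : ℕ) < 2 ^ n := by
      calc 1 < 2 ^ 1 := by norm_num
      _ ≤ 2 ^ n := Nat.pow_le_pow_right (by norm_num) hn
    have hq : ((2 : ℚ) ^ n - 1) = ((2 ^ n - 1 : ℕ) : ℚ) := by push_cast [h1]; ring
    have hq0 : ((2 : ℚ) ^ n - 1) ≠ 0 := by
      rw [hq]
      exact_mod_cast Nat.sub_ne_zero_of_lt hlt
    have hnorm : padicNorm 3 ((2 : ℚ) ^ n - 1) = (3:ℚ) ^ (-(v n : ℤ)) := by
      rw [padicNorm.eq_zpow_of_nonzero hq0]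
      congr 1
      rw [hq, padicValRat.of_nat]
    have hcast : ((((2 : ℚ) ^ n - 1) * padicNorm 3 ((2 : ℚ) ^ n - 1) : ℚ) : ℝ)
        = ((2:ℝ) ^ n - 1) * (3:ℝ) ^ (-(v n : ℤ)) := by
      rw [hnorm]; push_cast; ring
    have hr1 : (1:ℝ) < (2:ℝ) ^ n := by
      calc (1:ℝ) = ((1:ℕ):ℝ) := by norm_num
        _ < ((2^n : ℕ) : ℝ) := by exact_mod_cast hlt
        _ = (2:ℝ)^n := by push_cast; ring
    rw [hcast, Real.log_mul (by linarith) (by positivity), Real.log_zpow]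
    push_cast
    ring
  have hEq : (fun n : ℕ =>
        Real.log ((((2 : ℚ) ^ n - 1) * padicNorm 3 ((2 : ℚ) ^ n - 1) : ℚ) : ℝ) / (n : ℝ))
      =ᶠ[Filter.atTop] fun n => Real.log ((2:ℝ) ^ n - 1) / n - (v n * Real.log 3) / n := by
    filter_upwards [Filter.eventually_ge_atTop 1] with n hn using key n hn
  rw [Filter.tendsto_congr' hEq]
  have hA : Filter.Tendsto (fun n : ℕ => Real.log ((2:ℝ) ^ n - 1) / n)
      Filter.atTop (nhds (Real.log 2)) := by
    have hlow : Filter.Tendsto (fun n : ℕ => Real.log 2 - Real.log 2 / n)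
        Filter.atTop (nhds (Real.log 2)) := by
      have := tendsto_one_div_atTop_nhds_zero_nat.const_mul (Real.log 2)
      have h2 := (tendsto_const_nhds (x := Real.log 2) (f := Filter.atTop (α := ℕ))).sub this
      simpa [div_eq_mul_inv] using h2
    refine tendsto_of_tendsto_of_tendsto_of_le_of_le' hlow tendsto_const_nhds ?_ ?_
    · filter_upwards [Filter.eventually_ge_atTop 1] with n hn
      have hn0 : (0:ℝ) < n := by exact_mod_cast hn
      have hle : (2:ℝ) ^ (n-1) ≤ (2:ℝ) ^ n - 1 := by
        have : (2:ℕ) ^ (n-1) ≤ 2 ^ n - 1 := by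
          have h2 : (2:ℕ) ^ n = 2 * 2 ^ (n-1) := by
            rw [← pow_succ']
            congr 1
            omega
          have := Nat.one_le_two_pow (n := n - 1)
          omega
        calc (2:ℝ) ^ (n-1) = ((2^(n-1) : ℕ) : ℝ) := by push_cast; ring
          _ ≤ ((2^n - 1 : ℕ) : ℝ) := by exact_mod_cast this
          _ = (2:ℝ)^n - 1 := by push_cast [Nat.one_le_two_pow]; ring
      have hlog : ((n:ℝ) - 1) * Real.log 2 ≤ Real.log ((2:ℝ) ^ n - 1) := by
        calc ((n:ℝ) - 1) * Real.log 2 = Real.log ((2:ℝ) ^ (n-1)) := by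
              rw [Real.log_pow]
              have : ((n - 1 : ℕ) : ℝ) = (n:ℝ) - 1 := by
                push_cast [hn]; ring
              rw [this]
          _ ≤ _ := Real.log_le_log (by positivity) hle
      rw [le_div_iff₀ hn0]
      have hdiv : Real.log 2 / n * n = Real.log 2 := div_mul_cancel₀ _ (ne_of_gt hn0)
      nlinarith [hlog]
    · filter_upwards [Filter.eventually_ge_atTop 1] with n hn
      have hn0 : (0:ℝ) < n := by exact_mod_cast hn
      have hr1 : (1:ℝ) ≤ (2:ℝ) ^ n := one_le_pow₀ (by norm_num)
      have hr2 : (0:ℝ) < (2:ℝ) ^ n - 1 := by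
        have : (1:ℝ) < (2:ℝ) ^ n := by
          calc (1:ℝ) < 2 ^ 1 := by norm_num
            _ ≤ 2 ^ n := pow_le_pow_right₀ (by norm_num) hn
        linarith
      have : Real.log ((2:ℝ) ^ n - 1) ≤ n * Real.log 2 := by
        rw [← Real.log_pow]
        exact Real.log_le_log hr2 (by linarith)
      rw [div_le_iff₀ hn0]
      nlinarith
  have hB : Filter.Tendsto (fun n : ℕ => (v n * Real.log 3) / n)
      Filter.atTop (nhds 0) := by
    have hup : Filter.Tendsto (fun n : ℕ => (Real.log 3 + Real.log n) / n)
        Filter.atTop (nhds 0) := by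
      have hln : Filter.Tendsto (fun n : ℕ => Real.log n / n) Filter.atTop (nhds 0) :=
        (Real.isLittleO_log_id_atTop.tendsto_div_nhds_zero).comp tendsto_natCast_atTop_atTop
      have hc : Filter.Tendsto (fun n : ℕ => Real.log 3 / n) Filter.atTop (nhds 0) := by
        simpa [div_eq_mul_inv] using tendsto_one_div_atTop_nhds_zero_nat.const_mul (Real.log 3)
      have := hc.add hln
      simpa [add_div] using this
    refine tendsto_of_tendsto_of_tendsto_of_le_of_le' tendsto_const_nhds hup ?_ ?_
    · filter_upwards [Filter.eventually_ge_atTop 1] with n hn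
      have hn0 : (0:ℝ) < n := by exact_mod_cast hn
      positivity
    · filter_upwards [Filter.eventually_ge_atTop 1] with n hn
      have hn0 : (0:ℝ) < n := by exact_mod_cast hn
      have hb := val_bound hn
      have hbr : (3:ℝ) ^ (v n) ≤ 3 * n := by exact_mod_cast hb
      have hlog : (v n : ℝ) * Real.log 3 ≤ Real.log 3 + Real.log n := by
        calc (v n : ℝ) * Real.log 3 = Real.log ((3:ℝ) ^ (v n)) := (Real.log_pow _ _).symm
          _ ≤ Real.log (3 * n) := Real.log_le_log (by positivity) hbr
          _ = Real.log 3 + Real.log n := Real.log_mul (by norm_num) (ne_of_gt hn0)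
      gcongr
  have := hA.sub hB
  simpa using this
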